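/- If n is an odd positive integer, then the set of odd integers strictly between 0 and n/3 is a 3-free set in Z_n; hence s(Z_n, 3) ≥ ⌊n/6⌋ for odd n. -/

import Mathlib

/-- `S` is a `t`-free set in the additive abelian group `G`: whenever a sum of `k`
elements of `S` equals a sum of `l` elements of `S` with `k + l ≤ t`, the two
multisets of terms coincide (in particular `k = l`). -/
def IsTFreeSet {G : Type*} [AddCommGroup G] (t : ℕ) (S : Set G) : Prop :=
  ∀ A B : Multiset G, (∀ x ∈ A, x ∈ S) → (∀ x ∈ B, x ∈ S) →
    Multiset.card A + Multiset.card B ≤ t → A.sum = B.sum → A = B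

private lemma lift_mult (n : ℕ) (A : Multiset (ZMod n))
    (h : ∀ x ∈ A, ∃ k : ℕ, (k % 2 = 1 ∧ 3 * k < n) ∧ (k : ZMod n) = x) :
    ∃ A' : Multiset ℕ, A'.map (fun k : ℕ => (k : ZMod n)) = A ∧
      ∀ k ∈ A', k % 2 = 1 ∧ 3 * k < n := by
  induction A using Multiset.induction_on with
  | empty => exact ⟨0, by simp, by simp⟩
  | cons a s ih =>
    obtain ⟨k, hk, hka⟩ := h a (Multiset.mem_cons_self a s)
    obtain ⟨s', hs'map, hs'⟩ := ih (fun x hx => h x (Multiset.mem_cons_of_mem hx))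
    refine ⟨k ::ₘ s', by rw [Multiset.map_cons, hka, hs'map], ?_⟩
    intro j hj
    rcases Multiset.mem_cons.mp hj with rfl | hj
    · exact hk
    · exact hs' j hj

private lemma sum_lt (n : ℕ) (A : Multiset ℕ) (hA : A ≠ 0)
    (h : ∀ k ∈ A, 3 * k < n) : 3 * A.sum < n * Multiset.card A := by
  induction A using Multiset.induction_on with
  | empty => exact absurd rfl hA
  | cons a s ih =>
    rcases eq_or_ne s 0 with rfl | hs
    · simpa using h a (Multiset.mem_cons_self a 0)
    · have h1 := h a (Multiset.mem_cons_self a s)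
      have h2 := ih hs (fun k hk => h k (Multiset.mem_cons_of_mem hk))
      simp only [Multiset.sum_cons, Multiset.card_cons]
      ring_nf
      ring_nf at h2
      omega

private lemma sum_lt' (n : ℕ) (hn : 0 < n) (A : Multiset ℕ)
    (hcard : Multiset.card A ≤ 3) (h : ∀ k ∈ A, 3 * k < n) : A.sum < n := by
  rcases eq_or_ne A 0 with rfl | hA
  · simpa using hn
  · have := sum_lt n A hA h
    have : n * Multiset.card A ≤ n * 3 := Nat.mul_le_mul_left n hcard
    have h3 := sum_lt n A hA h
    nlinarith [Multiset.card_pos.mpr hA]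

private lemma parity_sum (A : Multiset ℕ) (h : ∀ k ∈ A, k % 2 = 1) :
    A.sum % 2 = Multiset.card A % 2 := by
  induction A using Multiset.induction_on with
  | empty => simp
  | cons a s ih =>
    have h1 := h a (Multiset.mem_cons_self a s)
    have h2 := ih (fun k hk => h k (Multiset.mem_cons_of_mem hk))
    simp only [Multiset.sum_cons, Multiset.card_cons]
    omega

theorem three_free_odd (n : ℕ) (hn : 0 < n) (hodd : Odd n) :
    IsTFreeSet 3
      (↑(((Finset.range n).filter (fun k => k % 2 = 1 ∧ 3 * k < n)).image
          (fun (k : ℕ) => (k : ZMod n))) : Set (ZMod n)) ∧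
    n / 6 ≤ (((Finset.range n).filter (fun k => k % 2 = 1 ∧ 3 * k < n)).image
          (fun (k : ℕ) => (k : ZMod n))).card := by
  haveI : NeZero n := ⟨hn.ne'⟩
  constructor
  · intro A B hA hB hcard hsum
    have hA' : ∀ x ∈ A, ∃ k : ℕ, (k % 2 = 1 ∧ 3 * k < n) ∧ (k : ZMod n) = x := by
      intro x hx
      have := hA x hx
      simp only [Finset.coe_image, Set.mem_image, Finset.mem_coe, Finset.mem_filter,
        Finset.mem_range] at this
      obtain ⟨k, ⟨_, hk⟩, hkx⟩ := this
      exact ⟨k, hk, hkx⟩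
    have hB' : ∀ x ∈ B, ∃ k : ℕ, (k % 2 = 1 ∧ 3 * k < n) ∧ (k : ZMod n) = x := by
      intro x hx
      have := hB x hx
      simp only [Finset.coe_image, Set.mem_image, Finset.mem_coe, Finset.mem_filter,
        Finset.mem_range] at this
      obtain ⟨k, ⟨_, hk⟩, hkx⟩ := this
      exact ⟨k, hk, hkx⟩
    obtain ⟨A', hAmap, hAprop⟩ := lift_mult n A hA'
    obtain ⟨B', hBmap, hBprop⟩ := lift_mult n B hB'
    have hcardA : Multiset.card A' = Multiset.card A := by
      rw [← hAmap, Multiset.card_map]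
    have hcardB : Multiset.card B' = Multiset.card B := by
      rw [← hBmap, Multiset.card_map]
    have hAsum : ((A'.sum : ℕ) : ZMod n) = A.sum := by
      rw [← hAmap]; push_cast; rfl
    have hBsum : ((B'.sum : ℕ) : ZMod n) = B.sum := by
      rw [← hBmap]; push_cast; rfl
    have hAlt : A'.sum < n :=
      sum_lt' n hn A' (by omega) (fun k hk => (hAprop k hk).2)
    have hBlt : B'.sum < n :=
      sum_lt' n hn B' (by omega) (fun k hk => (hBprop k hk).2)
    have hsum' : A'.sum = B'.sum := by
      have : ((A'.sum : ℕ) : ZMod n) = ((B'.sum : ℕ) : ZMod n) := by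
        rw [hAsum, hBsum, hsum]
      have hv := congrArg ZMod.val this
      rwa [ZMod.val_cast_of_lt hAlt, ZMod.val_cast_of_lt hBlt] at hv
    have hpA := parity_sum A' (fun k hk => (hAprop k hk).1)
    have hpB := parity_sum B' (fun k hk => (hBprop k hk).1)
    set a := Multiset.card A' with ha
    set b := Multiset.card B' with hb
    have hzero : ∀ C : Multiset ℕ, (∀ k ∈ C, k % 2 = 1) → C.sum = 0 →
        Multiset.card C = 0 := by
      intro C hC hCsum
      by_contra h
      obtain ⟨y, hy⟩ := Multiset.card_pos_iff_exists_mem.mp (Nat.pos_of_ne_zero h)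
      have := Multiset.single_le_sum (fun x _ => Nat.zero_le x) y hy
      have := hC y hy
      omega
    have hcases : (a = 0 ∧ b = 0) ∨ (a = 1 ∧ b = 1) ∨ (a = 0 ∧ b = 2) ∨
        (a = 2 ∧ b = 0) := by omega
    rcases hcases with ⟨h1, h2⟩ | ⟨h1, h2⟩ | ⟨h1, h2⟩ | ⟨h1, h2⟩
    · rw [← hAmap, ← hBmap, Multiset.card_eq_zero.mp h1, Multiset.card_eq_zero.mp h2]
    · obtain ⟨x, hx⟩ := Multiset.card_eq_one.mp h1
      obtain ⟨y, hy⟩ := Multiset.card_eq_one.mp h2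
      rw [hx, hy] at hsum'
      simp only [Multiset.sum_singleton] at hsum'
      rw [← hAmap, ← hBmap, hx, hy, hsum']
    · exfalso
      have hs0 : B'.sum = 0 := by
        have : A'.sum = 0 := by
          rw [Multiset.card_eq_zero.mp h1]; simp
        omega
      have := hzero B' (fun k hk => (hBprop k hk).1) hs0
      omega
    · exfalso
      have hs0 : A'.sum = 0 := by
        have : B'.sum = 0 := by
          rw [Multiset.card_eq_zero.mp h2]; simp
        omega
      have := hzero A' (fun k hk => (hAprop k hk).1) hs0
      omega
  · rw [Finset.card_image_of_injOn]
    · calc n / 6 = (Finset.range (n / 6)).card := (Finset.card_range _).symm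
        _ ≤ _ := by
            apply Finset.card_le_card_of_injOn (fun j => 2 * j + 1)
            · intro j hj
              simp only [Finset.mem_coe, Finset.mem_range] at hj
              simp only [Finset.mem_coe, Finset.mem_filter, Finset.mem_range]
              omega
            · intro j1 _ j2 _ h
              simp only at h
              omega
    · intro k1 hk1 k2 hk2 h
      simp only [Finset.coe_filter, Set.mem_setOf_eq, Finset.mem_range] at hk1 hk2
      have := congrArg ZMod.val h
      rwa [ZMod.val_cast_of_lt hk1.1, ZMod.val_cast_of_lt hk2.1] at this
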